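/- Let u, v : ℤ → ℂ be finitely supported sequences and p a polynomial of degree m. Then p*u = p*v (as polynomials) if and only if û^{(j)}(0) = v̂^{(j)}(0) for all j = 0, 1, …, m, where û(ξ) := ∑_{k∈ℤ} u(k) e^{-ikξ}. -/

import Mathlib

open Complex Polynomial

/-- Symbol (Fourier series) of a sequence `u : ℤ → ℂ`. -/
noncomputable def symb (u : ℤ → ℂ) (ξ : ℂ) : ℂ :=
  ∑ᶠ k : ℤ, u k * Complex.exp (-Complex.I * k * ξ)

/-- Convolution of a polynomial with a finitely supported sequence, as a polynomial. -/
noncomputable def pconv (q : Polynomial ℂ) (u : ℤ → ℂ) : Polynomial ℂ :=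
  ∑ᶠ k : ℤ, u k • (q.comp (Polynomial.X - Polynomial.C (k : ℂ)))

lemma stmt2_aux_deriv (s : Finset ℤ) (c : ℤ → ℂ) (j : ℕ) :
    iteratedDeriv j (fun ξ => ∑ k ∈ s, c k * Complex.exp (-Complex.I * k * ξ)) =
      fun ξ => ∑ k ∈ s, c k * (-Complex.I * k) ^ j * Complex.exp (-Complex.I * k * ξ) := by
  induction j generalizing c with
  | zero => funext ξ; simp
  | succ j ih =>
    rw [iteratedDeriv_succ']
    have hd : (deriv fun ξ => ∑ k ∈ s, c k * Complex.exp (-Complex.I * k * ξ)) =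
        fun ξ => ∑ k ∈ s, (c k * (-Complex.I * k)) * Complex.exp (-Complex.I * k * ξ) := by
      funext ξ
      have key : HasDerivAt (fun ξ => ∑ k ∈ s, c k * Complex.exp (-Complex.I * k * ξ))
          (∑ k ∈ s, (c k * (-Complex.I * k)) * Complex.exp (-Complex.I * k * ξ)) ξ := by
        apply HasDerivAt.fun_sum
        intro k _
        have h1 : HasDerivAt (fun ξ : ℂ => -Complex.I * k * ξ) (-Complex.I * k) ξ := by
          simpa using (hasDerivAt_id ξ).const_mul (-Complex.I * (k : ℂ))
        have h2 := (h1.cexp).const_mul (c k)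
        exact h2.congr_deriv (by ring)
      exact key.deriv
    rw [hd, ih]
    funext ξ
    refine Finset.sum_congr rfl fun k _ => ?_
    ring

lemma stmt2_aux_taylor (p : Polynomial ℂ) (m : ℕ) (hm : p.natDegree = m) (r : ℂ) :
    p.comp (X - C r) = ∑ j ∈ Finset.range (m + 1), ((-r) ^ j) • Polynomial.hasseDeriv j p := by
  apply Polynomial.funext
  intro x
  have h2 : (Polynomial.taylor x p).eval (-r) =
      ∑ i ∈ Finset.range (m + 1), (Polynomial.taylor x p).coeff i * (-r) ^ i :=
    Polynomial.eval_eq_sum_range' (by rw [Polynomial.natDegree_taylor, hm]; omega) _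
  simp only [Polynomial.taylor_coeff] at h2
  rw [Polynomial.taylor_apply, Polynomial.eval_comp] at h2
  simp only [Polynomial.eval_add, Polynomial.eval_X, Polynomial.eval_C] at h2
  rw [Polynomial.eval_comp]
  simp only [Polynomial.eval_sub, Polynomial.eval_X, Polynomial.eval_C, Polynomial.eval_finset_sum,
    Polynomial.eval_smul, smul_eq_mul]
  rw [show x - r = -r + x by ring]
  rw [h2]
  exact Finset.sum_congr rfl fun i _ => by ring

lemma stmt2_aux_inj (p : Polynomial ℂ) (m : ℕ) (hm : p.natDegree = m) (hp0 : p ≠ 0) (c : ℕ → ℂ)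
    (h : ∑ j ∈ Finset.range (m + 1), c j • Polynomial.hasseDeriv j p = 0) :
    ∀ i ≤ m, c i = 0 := by
  intro i
  induction i using Nat.strong_induction_on with
  | _ i ih =>
    intro him
    have hc := congrArg (fun q => Polynomial.coeff q (m - i)) h
    simp only [Polynomial.finset_sum_coeff, Polynomial.coeff_smul, Polynomial.coeff_zero,
      Polynomial.hasseDeriv_coeff, smul_eq_mul] at hc
    rw [Finset.sum_eq_single i] at hc
    · rw [Nat.sub_add_cancel him] at hc
      have h1 : ((m.choose i : ℂ)) ≠ 0 := Nat.cast_ne_zero.mpr (Nat.choose_pos him).ne'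
      have h2 : p.coeff m ≠ 0 := by
        rw [← hm]; exact Polynomial.leadingCoeff_ne_zero.mpr hp0
      rcases mul_eq_zero.mp hc with h | h
      · exact h
      · exact absurd (mul_eq_zero.mp h) (by push_neg; exact ⟨h1, h2⟩)
    · intro j hjr hji
      rcases lt_or_gt_of_ne hji with hlt | hgt
      · rw [ih j hlt (by omega), zero_mul]
      · have : p.coeff (m - i + j) = 0 :=
          Polynomial.coeff_eq_zero_of_natDegree_lt (by omega)
        rw [this, mul_zero, mul_zero]
    · intro hni; exact absurd (Finset.mem_range.mpr (by omega)) hni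

/-- `p*u = p*v` iff the symbols of `u` and `v` agree to order `m` at `0`. -/
theorem stmt2 (u v : ℤ → ℂ) (hu : (Function.support u).Finite)
    (hv : (Function.support v).Finite) (m : ℕ) (p : Polynomial ℂ) (hp : p.degree = m) :
    pconv p u = pconv p v ↔
      ∀ j ≤ m, iteratedDeriv j (symb u) 0 = iteratedDeriv j (symb v) 0 := by
  have hm : p.natDegree = m := natDegree_eq_of_degree_eq_some hp
  have hp0 : p ≠ 0 := by
    intro h; rw [h] at hp; simp at hp
  set s : Finset ℤ := hu.toFinset ∪ hv.toFinset with hs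
  have hsu : Function.support u ⊆ ↑s := fun x hx =>
    Finset.mem_coe.mpr (Finset.mem_union_left _ (hu.mem_toFinset.mpr hx))
  have hsv : Function.support v ⊆ ↑s := fun x hx =>
    Finset.mem_coe.mpr (Finset.mem_union_right _ (hv.mem_toFinset.mpr hx))
  -- iterated derivatives of the symbol
  have hsymb : ∀ w : ℤ → ℂ, Function.support w ⊆ ↑s → ∀ j : ℕ,
      iteratedDeriv j (symb w) 0 = Complex.I ^ j * ∑ k ∈ s, w k * (-(k : ℂ)) ^ j := by
    intro w hw j
    have h1 : symb w = fun ξ => ∑ k ∈ s, w k * Complex.exp (-Complex.I * k * ξ) := by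
      funext ξ
      exact finsum_eq_sum_of_support_subset _
        (fun k hk => hw (fun h0 => hk (by simp [h0])))
    rw [h1, stmt2_aux_deriv]
    rw [Finset.mul_sum]
    refine Finset.sum_congr rfl fun k _ => ?_
    rw [mul_zero, Complex.exp_zero, mul_one]
    ring
  -- the convolution in terms of moments and Hasse derivatives
  have hpconv : ∀ w : ℤ → ℂ, Function.support w ⊆ ↑s →
      pconv p w = ∑ j ∈ Finset.range (m + 1),
        (∑ k ∈ s, w k * (-(k : ℂ)) ^ j) • Polynomial.hasseDeriv j p := by
    intro w hw
    have h1 : pconv p w = ∑ k ∈ s, w k • (p.comp (X - C (k : ℂ))) :=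
      finsum_eq_sum_of_support_subset _
        (fun k hk => hw (fun h0 => hk (by simp [h0])))
    rw [h1]
    have h2 : ∀ k ∈ s, w k • (p.comp (X - C (k : ℂ))) =
        ∑ j ∈ Finset.range (m + 1), (w k * (-(k : ℂ)) ^ j) • Polynomial.hasseDeriv j p := by
      intro k _
      rw [stmt2_aux_taylor p m hm (k : ℂ), Finset.smul_sum]
      exact Finset.sum_congr rfl fun j _ => by rw [smul_smul]
    rw [Finset.sum_congr rfl h2, Finset.sum_comm]
    refine Finset.sum_congr rfl fun j _ => ?_
    rw [Finset.sum_smul]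
  set Mu : ℕ → ℂ := fun j => ∑ k ∈ s, u k * (-(k : ℂ)) ^ j with hMu
  set Mv : ℕ → ℂ := fun j => ∑ k ∈ s, v k * (-(k : ℂ)) ^ j with hMv
  constructor
  · intro h j hj
    have hz : ∑ j ∈ Finset.range (m + 1), (Mu j - Mv j) • Polynomial.hasseDeriv j p = 0 := by
      rw [Finset.sum_congr rfl (fun j _ => sub_smul (Mu j) (Mv j) _), Finset.sum_sub_distrib,
        ← hpconv u hsu, ← hpconv v hsv, h, sub_self]
    have hMeq : Mu j = Mv j := sub_eq_zero.mp (stmt2_aux_inj p m hm hp0 _ hz j hj)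
    rw [hsymb u hsu j, hsymb v hsv j]
    change Complex.I ^ j * Mu j = Complex.I ^ j * Mv j
    rw [hMeq]
  · intro h
    rw [hpconv u hsu, hpconv v hsv]
    refine Finset.sum_congr rfl fun j hj => ?_
    have hj' : j ≤ m := Nat.lt_succ_iff.mp (Finset.mem_range.mp hj)
    have heq := h j hj'
    rw [hsymb u hsu j, hsymb v hsv j] at heq
    have hMeq : Mu j = Mv j :=
      mul_left_cancel₀ (pow_ne_zero j Complex.I_ne_zero) heq
    change Mu j • _ = Mv j • _
    rw [hMeq]
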